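/- arXiv:math/9903135 — 2 statements merged into one kernel-verified Lean document; each statement's English description precedes it below -/
import Mathlib

section
/- Let X be a finite quandle, A an abelian group, and θ a quandle 3-cocycle of X with values in A (written multiplicatively). Define Φ(θ) = Σ_{(y₁,y₂)} θ(y₁*y₂, y₁, y₂)·θ(y₁*y₂, y₂, y₁*y₂)·θ(y₂, y₁*y₂, y₁)·θ(y₁, y₁*y₂, y₂)⁻¹·θ(y₁*y₂, y₁, y₁*y₂)⁻¹·θ(y₁, y₂, y₁*y₂)⁻¹ ∈ Z[A], summed over pairs (y₁,y₂) ∈ X² with y₂ = (y₁*y₂)*y₁ and y₂ = (y₂*y₁)*y₁. For X = R_3, A = Z_3 = ⟨t⟩, and θ = t^(−χ_{(0,1,0)} + χ_{(0,2,0)} − χ_{(0,2,1)} + χ_{(1,0,1)} + χ_{(1,0,2)} + χ_{(2,0,2)} + χ_{(2,1,2)}), one has Φ(θ) = 3 + 6t. -/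
/-- The dihedral quandle `R₃` operation on `ZMod 3`: `i * j = 2j − i`. -/
def r3op (i j : ZMod 3) : ZMod 3 := 2 * j - i

/-- Characteristic function `χ_{(a,b,c)}` on `R₃³`, valued in `ℤ₃`. -/
def chi3 (a b c p q r : ZMod 3) : ZMod 3 :=
  if p = a ∧ q = b ∧ r = c then 1 else 0

/-- The exponent of the 3-cocycle:
`−χ_{(0,1,0)} + χ_{(0,2,0)} − χ_{(0,2,1)} + χ_{(1,0,1)} + χ_{(1,0,2)}
 + χ_{(2,0,2)} + χ_{(2,1,2)}`. -/
def thetaExp (p q r : ZMod 3) : ZMod 3 :=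
  -chi3 0 1 0 p q r + chi3 0 2 0 p q r - chi3 0 2 1 p q r +
    chi3 1 0 1 p q r + chi3 1 0 2 p q r + chi3 2 0 2 p q r +
    chi3 2 1 2 p q r

/-- The 3-cocycle `θ = t^(thetaExp)`, valued in the multiplicative cyclic
group `ℤ₃ = ⟨t⟩` of order 3. -/
def theta (p q r : ZMod 3) : Multiplicative (ZMod 3) :=
  Multiplicative.ofAdd (thetaExp p q r)

/-- The state-sum weight of a coloring `(y₁, y₂)` for the 2-twist spun
trefoil. -/
def weight (y : ZMod 3 × ZMod 3) : Multiplicative (ZMod 3) :=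
  theta (r3op y.1 y.2) y.1 y.2 * theta (r3op y.1 y.2) y.2 (r3op y.1 y.2) *
    theta y.2 (r3op y.1 y.2) y.1 * (theta y.1 (r3op y.1 y.2) y.2)⁻¹ *
    (theta (r3op y.1 y.2) y.1 (r3op y.1 y.2))⁻¹ *
    (theta y.1 y.2 (r3op y.1 y.2))⁻¹

/-- The state-sum `Φ(θ)` in the group ring `ℤ[ℤ₃]`, summed over the pairs
`(y₁, y₂) ∈ X²` with `y₂ = (y₁*y₂)*y₁` and `y₂ = (y₂*y₁)*y₁`. -/
noncomputable def stateSum : MonoidAlgebra ℤ (Multiplicative (ZMod 3)) :=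
  ∑ y ∈ Finset.univ.filter
      (fun y : ZMod 3 × ZMod 3 =>
        y.2 = r3op (r3op y.1 y.2) y.1 ∧ y.2 = r3op (r3op y.2 y.1) y.1),
    MonoidAlgebra.single (weight y) (1 : ℤ)

/-- For `X = R₃`, `A = ℤ₃ = ⟨t⟩`, and the 3-cocycle `θ` above, the state-sum
invariant of the 2-twist spun trefoil is `Φ(θ) = 3 + 6t`. -/
theorem stateSum_twist_spun_trefoil :
    stateSum = 3 + MonoidAlgebra.single
      (Multiplicative.ofAdd (1 : ZMod 3)) (6 : ℤ) := by
  have hf : (Finset.univ.filter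
      (fun y : ZMod 3 × ZMod 3 =>
        y.2 = r3op (r3op y.1 y.2) y.1 ∧ y.2 = r3op (r3op y.2 y.1) y.1))
      = Finset.univ := by decide
  rw [stateSum, hf]
  ext g
  rw [MonoidAlgebra.coeff_sum, Finset.sum_apply']
  simp only [MonoidAlgebra.single_apply]
  have h3 : ((3 : MonoidAlgebra ℤ (Multiplicative (ZMod 3)))) =
    MonoidAlgebra.single 1 3 := by
    rw [show ((3 : MonoidAlgebra ℤ (Multiplicative (ZMod 3)))) = ((3:ℕ) : MonoidAlgebra ℤ (Multiplicative (ZMod 3))) by norm_num, MonoidAlgebra.natCast_def]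
    norm_num
  rw [h3]
  rw [MonoidAlgebra.coeff_add, Finsupp.add_apply]
  simp only [MonoidAlgebra.single_apply]
  rw [show (Finset.univ : Finset (ZMod 3 × ZMod 3)) = {(0,0),(0,1),(0,2),(1,0),(1,1),(1,2),(2,0),(2,1),(2,2)} from by decide]
  simp only [show ∀ y : ZMod 3 × ZMod 3, weight y = Multiplicative.ofAdd (if y = (0,0) ∨ y = (1,1) ∨ y = (2,2) then (0:ZMod 3) else 1) from by decide]
  revert g; decide
end

section
/- With the same quandle R_3, group Z_3 = ⟨t⟩, and 3-cocycle θ as before, the mirror state-sum Φ'(θ) = Σ_{(y₁,y₂)} θ(y₂, y₁*y₂, y₁)⁻¹·θ(y₂, y₁, y₂)⁻¹·θ(y₁, y₂, y₁*y₂)⁻¹·θ(y₁*y₂, y₂, y₁)·θ(y₂, y₁*y₂, y₂)·θ(y₁*y₂, y₁, y₂), summed over all pairs (y₁,y₂) ∈ R_3², equals 3 + 6t². In particular Φ(θ) = 3 + 6t ≠ 3 + 6t² = Φ'(θ) in Z[t]/(t³−1). -/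
/-- Mirror state-sum weight (for the orientation-reversed 2-twist spun
trefoil). -/
def weight' (y : ZMod 3 × ZMod 3) : Multiplicative (ZMod 3) :=
  (theta y.2 (r3op y.1 y.2) y.1)⁻¹ * (theta y.2 y.1 y.2)⁻¹ *
    (theta y.1 y.2 (r3op y.1 y.2))⁻¹ * theta (r3op y.1 y.2) y.2 y.1 *
    theta y.2 (r3op y.1 y.2) y.2 * theta (r3op y.1 y.2) y.1 y.2

/-- The mirror state-sum `Φ'(θ)`, summed over all pairs `(y₁,y₂) ∈ R₃²`. -/
noncomputable def stateSum' : MonoidAlgebra ℤ (Multiplicative (ZMod 3)) :=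
  ∑ y : ZMod 3 × ZMod 3, MonoidAlgebra.single (weight' y) (1 : ℤ)

/-- The mirror state-sum equals `3 + 6t²`, and in particular
`Φ(θ) = 3 + 6t ≠ 3 + 6t² = Φ'(θ)` in `ℤ[t]/(t³−1)`: the algebraic content of
the non-invertibility of the 2-twist spun trefoil. -/
theorem stateSum_mirror :
    stateSum' = 3 + MonoidAlgebra.single
        (Multiplicative.ofAdd (2 : ZMod 3)) (6 : ℤ) ∧
    stateSum ≠ stateSum' := by
  have hw' : ∀ y : ZMod 3 × ZMod 3, weight' y =
      if y.1 = y.2 then 1 else Multiplicative.ofAdd (2 : ZMod 3) := by decide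
  have hw : ∀ y : ZMod 3 × ZMod 3, weight y =
      if y.1 = y.2 then 1 else Multiplicative.ofAdd (1 : ZMod 3) := by decide
  have hfilt : (Finset.univ.filter
      (fun y : ZMod 3 × ZMod 3 =>
        y.2 = r3op (r3op y.1 y.2) y.1 ∧ y.2 = r3op (r3op y.2 y.1) y.1)) =
      Finset.univ := by decide
  have h2 : stateSum' = 3 + MonoidAlgebra.single
      (Multiplicative.ofAdd (2 : ZMod 3)) (6 : ℤ) := by
    rw [stateSum', Fintype.sum_prod_type]
    show ∑ x : Fin 3, ∑ y : Fin 3, _ = _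
    simp only [Fin.sum_univ_three, hw']
    simp only [show ∀ a b : Fin 3, (@Eq (ZMod 3) a b) = (a = b) from fun _ _ => rfl]
    norm_num +decide [← Finsupp.single_add, MonoidAlgebra.natCast_def,
      show ((0:ZMod 3)=2)=False from by decide, show ((1:ZMod 3)=2)=False from by decide,
      show ((2:ZMod 3)=0)=False from by decide, show ((2:ZMod 3)=1)=False from by decide]
    rw [show (3 : MonoidAlgebra ℤ (Multiplicative (ZMod 3))) =
        (3:ℤ) • MonoidAlgebra.single 1 (1:ℤ) from by
      simpa using (MonoidAlgebra.natCast_def (R:=ℤ) (M:=Multiplicative (ZMod 3)) 3),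
      show (MonoidAlgebra.single (Multiplicative.ofAdd (2:ZMod 3)) (6:ℤ)) =
        (6:ℤ) • MonoidAlgebra.single (Multiplicative.ofAdd (2:ZMod 3)) (1:ℤ) from by
      simp]
    abel
  have h1 : stateSum = 3 + MonoidAlgebra.single
      (Multiplicative.ofAdd (1 : ZMod 3)) (6 : ℤ) := by
    rw [stateSum, hfilt, Fintype.sum_prod_type]
    show ∑ x : Fin 3, ∑ y : Fin 3, _ = _
    simp only [Fin.sum_univ_three, hw]
    simp only [show ∀ a b : Fin 3, (@Eq (ZMod 3) a b) = (a = b) from fun _ _ => rfl]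
    norm_num +decide [show ((0:ZMod 3)=2)=False from by decide, show ((1:ZMod 3)=2)=False from by decide,
      show ((2:ZMod 3)=0)=False from by decide, show ((2:ZMod 3)=1)=False from by decide]
    rw [show (3 : MonoidAlgebra ℤ (Multiplicative (ZMod 3))) =
        (3:ℤ) • MonoidAlgebra.single 1 (1:ℤ) from by
      simpa using (MonoidAlgebra.natCast_def (R:=ℤ) (M:=Multiplicative (ZMod 3)) 3),
      show (MonoidAlgebra.single (Multiplicative.ofAdd (1:ZMod 3)) (6:ℤ)) =
        (6:ℤ) • MonoidAlgebra.single (Multiplicative.ofAdd (1:ZMod 3)) (1:ℤ) from by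
      simp]
    abel
  refine ⟨h2, ?_⟩
  rw [h1, h2]
  intro h
  have h' := add_left_cancel h
  rw [MonoidAlgebra.single_inj] at h'
  revert h'
  decide
end
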